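/- The Laplacian of the star semigraph S³_{2,n} has eigenvalue 1/2 with multiplicity exactly n−1, eigenvalue 0 with multiplicity 1, and three further eigenvalues which are the roots of λ³ − ((n+17)/2)λ² + (19 + 3n)λ − (5n+15)/2. -/

import Mathlib

open Matrix Polynomial BigOperators

/-- The Laplacian of the star semigraph `S³_{2,n}` on `n+3` vertices: one size-3 full
edge `(v₂, v₁, v₃)` with middle vertex `v₁` (index 0), and `n` half edges `(v₁, v_k)`,
`k = 4, …, n+3`, in which `v₁` is a middle end vertex. -/
noncomputable def starLap (n : ℕ) : Matrix (Fin (n + 3)) (Fin (n + 3)) ℝ :=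
  fun i j =>
    if (i : ℕ) = 0 then
      (if (j : ℕ) = 0 then ((n : ℝ) + 4) / 2 else if (j : ℕ) ≤ 2 then -1 else -(1/2))
    else if (i : ℕ) ≤ 2 then
      (if (j : ℕ) = 0 then -1 else if j = i then 3 else if (j : ℕ) ≤ 2 then -2 else 0)
    else
      (if (j : ℕ) = 0 then -(1/2) else if j = i then 1/2 else 0)

noncomputable def cubicP (n : ℕ) : Polynomial ℝ :=
  X^3 - C (((n:ℝ) + 17)/2) * X^2 + C (19 + 3*(n:ℝ)) * X - C ((5*(n:ℝ) + 15)/2)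

lemma eval_cubicP (n : ℕ) (x : ℝ) :
    (cubicP n).eval x = x^3 - ((n:ℝ)+17)/2*x^2 + (19+3*(n:ℝ))*x - (5*(n:ℝ)+15)/2 := by
  simp [cubicP]

def emap (n : ℕ) : Fin 3 ⊕ Fin n ≃ Fin (n + 3) :=
  finSumFinEquiv.trans (finCongr (by omega))

lemma emap_inl (n : ℕ) (a : Fin 3) : ((emap n (Sum.inl a) : Fin (n+3)) : ℕ) = a := by
  simp [emap]

lemma emap_inr (n : ℕ) (k : Fin n) : ((emap n (Sum.inr k) : Fin (n+3)) : ℕ) = 3 + k := by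
  simp [emap]; omega

lemma eval_charpoly' {m : ℕ} (M : Matrix (Fin m) (Fin m) ℝ) (x : ℝ) :
    M.charpoly.eval x = Matrix.det (x • (1 : Matrix (Fin m) (Fin m) ℝ) - M) := by
  rw [Matrix.charpoly, show (Polynomial.eval x : Polynomial ℝ → ℝ) = Polynomial.evalRingHom x from rfl,
    RingHom.map_det]
  congr 1
  ext i j
  by_cases h : i = j <;>
    simp [charmatrix_apply, h, Matrix.one_apply, diagonal_apply, Matrix.smul_apply]

lemma submatrix_eq (n : ℕ) (x : ℝ) :
    (x • (1 : Matrix (Fin (n+3)) (Fin (n+3)) ℝ) - starLap n).submatrix (emap n) (emap n) =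
      Matrix.fromBlocks
        !![x - ((n:ℝ)+4)/2, 1, 1; 1, x-3, 2; 1, 2, x-3]
        (Matrix.of fun i (_ : Fin n) => if i = (0 : Fin 3) then (1/2 : ℝ) else 0)
        (Matrix.of fun (_ : Fin n) j => if j = (0 : Fin 3) then (1/2 : ℝ) else 0)
        ((x - 1/2) • (1 : Matrix (Fin n) (Fin n) ℝ)) := by
  ext i j
  rcases i with a | k <;> rcases j with b | l
  · have ha := emap_inl n a
    have hb := emap_inl n b
    have : emap n (Sum.inl a) = emap n (Sum.inl b) ↔ a = b := by
      rw [Equiv.apply_eq_iff_eq]; simp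
    fin_cases a <;> fin_cases b <;>
      simp_all [starLap, Matrix.submatrix_apply, Matrix.smul_apply, Matrix.one_apply,
        Fin.ext_iff, Matrix.vecHead, Matrix.vecTail, -Fin.val_eq_zero_iff] <;> norm_num
  · have ha := emap_inl n a
    have hl := emap_inr n l
    have hne : emap n (Sum.inl a) ≠ emap n (Sum.inr l) := by
      intro h
      have h' := congrArg Fin.val h
      rw [ha, hl] at h'
      omega
    have h4 : ¬ (3 + (l:ℕ) ≤ 2) := by omega
    fin_cases a <;>
      simp_all [starLap, Matrix.submatrix_apply, Matrix.smul_apply, Matrix.one_apply,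
        Fin.ext_iff, -Fin.val_eq_zero_iff] <;> norm_num <;> rw [if_neg (by omega)] <;> norm_num
  · have hb := emap_inl n b
    have hk := emap_inr n k
    have hne : emap n (Sum.inr k) ≠ emap n (Sum.inl b) := by
      intro h
      have h' := congrArg Fin.val h
      rw [hb, hk] at h'
      omega
    have h1 : ¬ ((emap n (Sum.inr k) : ℕ) = 0) := by omega
    have h2 : ¬ ((emap n (Sum.inr k) : ℕ) ≤ 2) := by omega
    have h4 : ¬ (3 + (k:ℕ) ≤ 2) := by omega
    fin_cases b <;>
      simp_all [starLap, Matrix.submatrix_apply, Matrix.smul_apply, Matrix.one_apply,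
        Fin.ext_iff, -Fin.val_eq_zero_iff] <;> norm_num <;> rw [if_neg (by omega)] <;> norm_num
  · have hk := emap_inr n k
    have hl := emap_inr n l
    have h1 : ¬ ((emap n (Sum.inr k) : ℕ) = 0) := by omega
    have h2 : ¬ ((emap n (Sum.inr k) : ℕ) ≤ 2) := by omega
    have h3 : ¬ ((emap n (Sum.inr l) : ℕ) = 0) := by omega
    have heq : emap n (Sum.inr l) = emap n (Sum.inr k) ↔ l = k := by
      rw [Equiv.apply_eq_iff_eq]; simp
    have heq2 : emap n (Sum.inr k) = emap n (Sum.inr l) ↔ k = l := by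
      rw [Equiv.apply_eq_iff_eq]; simp
    by_cases h : k = l
    · subst h
      simp_all [starLap, Matrix.submatrix_apply, Matrix.smul_apply, Matrix.one_apply]
    · have h' : ¬ (l = k) := fun hh => h hh.symm
      simp_all [starLap, Matrix.submatrix_apply, Matrix.smul_apply, Matrix.one_apply]

lemma det_all (n : ℕ) (hn : 1 ≤ n) (x : ℝ) :
    Matrix.det (x • (1 : Matrix (Fin (n+3)) (Fin (n+3)) ℝ) - starLap n) * (x - 1/2) =
      (x - 1/2)^n * (x * (x^3 - ((n:ℝ)+17)/2*x^2 + (19+3*(n:ℝ))*x - (5*(n:ℝ)+15)/2)) := by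
  by_cases hx : x = 1/2
  · subst hx
    rw [show (1:ℝ)/2 - 1/2 = 0 by ring, mul_zero, zero_pow (by omega), zero_mul]
  · have h2 : x - 1/2 ≠ 0 := sub_ne_zero.mpr hx
    rw [← Matrix.det_submatrix_equiv_self (emap n), submatrix_eq]
    letI : Invertible ((x - 1/2) • (1 : Matrix (Fin n) (Fin n) ℝ)) :=
      ⟨(x - 1/2)⁻¹ • (1 : Matrix (Fin n) (Fin n) ℝ),
        by rw [smul_mul_smul_comm, inv_mul_cancel₀ h2, one_smul, Matrix.one_mul],
        by rw [smul_mul_smul_comm, mul_inv_cancel₀ h2, one_smul, Matrix.one_mul]⟩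
    rw [Matrix.det_fromBlocks₂₂]
    have hinv : ⅟((x - 1/2) • (1 : Matrix (Fin n) (Fin n) ℝ)) =
        (x - 1/2)⁻¹ • (1 : Matrix (Fin n) (Fin n) ℝ) := rfl
    rw [hinv]
    have hschur :
        !![x - ((n:ℝ)+4)/2, 1, 1; 1, x-3, 2; 1, 2, x-3] -
          (Matrix.of fun i (_ : Fin n) => if i = (0 : Fin 3) then (1/2 : ℝ) else 0) *
            ((x - 1/2)⁻¹ • (1 : Matrix (Fin n) (Fin n) ℝ)) *
            (Matrix.of fun (_ : Fin n) j => if j = (0 : Fin 3) then (1/2 : ℝ) else 0) =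
        !![x - ((n:ℝ)+4)/2 - (x - 1/2)⁻¹ * ((n:ℝ)/4), 1, 1; 1, x-3, 2; 1, 2, x-3] := by
      ext i j
      fin_cases i <;> fin_cases j <;>
        simp [Matrix.mul_apply, Matrix.smul_apply, Matrix.one_apply, Finset.sum_ite_eq,
          Matrix.vecHead, Matrix.vecTail, mul_comm, Finset.mul_sum] <;> ring
    rw [hschur, Matrix.det_smul, Matrix.det_one, Matrix.det_fin_three]
    simp only [Fintype.card_fin, mul_one]
    norm_num [Matrix.vecHead, Matrix.vecTail, Matrix.cons_val_two]
    rw [mul_assoc]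
    congr 1
    linear_combination (-(n:ℝ)/4 * ((x-3)^2 - 4)) * inv_mul_cancel₀ h2

lemma charpoly_eq (n : ℕ) (hn : 1 ≤ n) :
    (starLap n).charpoly = (X - C ((1:ℝ)/2))^(n-1) * (X * cubicP n) := by
  apply mul_right_cancel₀ (X_sub_C_ne_zero ((1:ℝ)/2))
  rw [mul_right_comm, ← pow_succ, Nat.sub_add_cancel hn]
  apply Polynomial.funext
  intro x
  rw [eval_mul, eval_sub, eval_X, eval_C, eval_charpoly', det_all n hn x]
  simp [eval_pow, eval_mul, eval_sub, eval_X, eval_C, eval_cubicP]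

/-- The Laplacian of the star semigraph `S³_{2,n}` has eigenvalue `1/2`
with (algebraic) multiplicity exactly `n - 1`, eigenvalue `0` with multiplicity `1`,
and the three remaining eigenvalues are the roots of
`λ³ - ((n+17)/2) λ² + (19 + 3n) λ - (5n+15)/2`. -/
theorem stmt13 (n : ℕ) (hn : 1 ≤ n) :
    ((starLap n).charpoly.rootMultiplicity ((1 : ℝ)/2) = n - 1) ∧
    ((starLap n).charpoly.rootMultiplicity 0 = 1) ∧
    (∀ μ : ℝ, μ^3 - ((n : ℝ) + 17)/2 * μ^2 + (19 + 3*(n : ℝ)) * μ - (5*(n : ℝ) + 15)/2 = 0 →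
      (starLap n).charpoly.IsRoot μ) := by
  have hn' : (1:ℝ) ≤ (n:ℝ) := by exact_mod_cast hn
  have hcub0 : (cubicP n).eval 0 ≠ 0 := by
    rw [eval_cubicP]; intro h; nlinarith
  have hcubhalf : (cubicP n).eval (1/2) ≠ 0 := by
    rw [eval_cubicP]
    intro h
    have : -(9:ℝ)*(n:ℝ)/8 = 0 := by linarith [h]; 
    nlinarith
  have hcub : cubicP n ≠ 0 := fun h => hcub0 (by rw [h]; simp)
  have hX : (X : ℝ[X]) ≠ 0 := X_ne_zero
  have hXcub : (X : ℝ[X]) * cubicP n ≠ 0 := mul_ne_zero hX hcub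
  have hpow : ((X - C ((1:ℝ)/2))^(n-1) : ℝ[X]) ≠ 0 := pow_ne_zero _ (X_sub_C_ne_zero _)
  have hfact := charpoly_eq n hn
  refine ⟨?_, ?_, ?_⟩
  · rw [hfact, Polynomial.rootMultiplicity_mul (mul_ne_zero hpow hXcub),
      Polynomial.rootMultiplicity_X_sub_C_pow,
      Polynomial.rootMultiplicity_eq_zero ?_, add_zero]
    intro h
    rw [IsRoot, eval_mul, eval_X] at h
    rcases mul_eq_zero.mp h with h | h
    · norm_num at h
    · exact hcubhalf h
  · rw [hfact, Polynomial.rootMultiplicity_mul (mul_ne_zero hpow hXcub)]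
    have h1 : ((X - C ((1:ℝ)/2))^(n-1)).rootMultiplicity 0 = 0 := by
      apply Polynomial.rootMultiplicity_eq_zero
      rw [IsRoot, eval_pow, eval_sub, eval_X, eval_C]
      intro h
      have h' : (0:ℝ) - 1/2 = 0 ∧ n - 1 ≠ 0 := pow_eq_zero_iff'.mp h
      norm_num at h'
    have hx1 : rootMultiplicity (0:ℝ) (X:ℝ[X]) = 1 := by
      rw [show (X:ℝ[X]) = X - C 0 by simp, Polynomial.rootMultiplicity_X_sub_C_self]
    have hc1 : rootMultiplicity (0:ℝ) (cubicP n) = 0 :=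
      Polynomial.rootMultiplicity_eq_zero hcub0
    rw [h1, zero_add, Polynomial.rootMultiplicity_mul hXcub, hx1, hc1]
  · intro μ hμ
    rw [hfact, IsRoot, eval_mul, eval_mul, eval_X, eval_cubicP]
    rw [show μ^3 - ((n:ℝ)+17)/2*μ^2 + (19+3*(n:ℝ))*μ - (5*(n:ℝ)+15)/2 =
        μ^3 - ((n:ℝ)+17)/2*μ^2 + (19+3*(n:ℝ))*μ - (5*(n:ℝ)+15)/2 from rfl]
    have : μ^3 - ((n:ℝ)+17)/2*μ^2 + (19+3*(n:ℝ))*μ - (5*(n:ℝ)+15)/2 = 0 := by linarith [hμ]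
    rw [this, mul_zero, mul_zero]
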